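/- Let T be a tree and let T' be the smallest subtree of T containing all vertices of maximum eccentricity d. Then every vertex x of T' has the same eccentricity in T' as it has in T. -/

import Mathlib

open SimpleGraph

/-- A set `S` of vertices is a fixing set of `G` if the only automorphism of `G`
fixing every vertex of `S` is the identity. -/
def IsFixingSet {V : Type*} (G : SimpleGraph V) (S : Set V) : Prop :=
  ∀ φ : G ≃g G, (∀ v ∈ S, φ v = v) → ∀ v, φ v = v

/-- The fixing number of a finite graph: the minimum cardinality of a fixing set. -/
noncomputable def fixingNumber {V : Type*} [Fintype V] (G : SimpleGraph V) : ℕ :=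
  sInf {n | ∃ S : Finset V, S.card = n ∧ IsFixingSet G ↑S}

/-- A coloring is distinguishing if the only color-preserving automorphism is the identity. -/
def IsDistinguishingColoring {V α : Type*} (G : SimpleGraph V) (c : V → α) : Prop :=
  ∀ φ : G ≃g G, (∀ v, c (φ v) = c v) → ∀ v, φ v = v

/-- `G` is `D`-distinguishable if it has a distinguishing coloring with at most `D` colors. -/
def Distinguishable {V : Type*} (G : SimpleGraph V) (D : ℕ) : Prop :=
  ∃ c : V → Fin D, IsDistinguishingColoring G c

/-- The distinguishing number of `G`. -/
noncomputable def distinguishingNumber {V : Type*} (G : SimpleGraph V) : ℕ :=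
  sInf {D | Distinguishable G D}

/-- Eccentricity of a vertex: the supremum of distances to other vertices. -/
noncomputable def ecc {V : Type*} (G : SimpleGraph V) (v : V) : ℕ :=
  sSup (Set.range (G.dist v))



section TreeLemmas

variable {V : Type*} {G : SimpleGraph V}

/-- In a tree, every path realizes the distance between its endpoints. -/
lemma tree_path_length (hT : G.IsTree) {u v : V} (p : G.Walk u v) (hp : p.IsPath) :
    p.length = G.dist u v := by
  obtain ⟨q, hq, hql⟩ := hT.isConnected.exists_path_of_dist u v
  have := hT.IsAcyclic.path_unique ⟨p, hp⟩ ⟨q, hq⟩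
  rw [show p = q from congrArg Subtype.val this, hql]

/-- Splitting a path at a support vertex gives additivity of distances. -/
lemma tree_split (hT : G.IsTree) {u v m : V} (p : G.Walk u v) (hp : p.IsPath)
    (hm : m ∈ p.support) : G.dist u m + G.dist m v = G.dist u v := by
  classical
  have h1 := tree_path_length hT _ (hp.takeUntil hm)
  have h2 := tree_path_length hT _ (hp.dropUntil hm)
  have h3 := tree_path_length hT p hp
  have h4 : (p.takeUntil m hm).length + (p.dropUntil m hm).length = p.length := by
    rw [← SimpleGraph.Walk.length_append, SimpleGraph.Walk.take_spec]
  omega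

lemma btw_mem_path (hT : G.IsTree) {u v m : V}
    (h : G.dist u m + G.dist m v = G.dist u v)
    (p : G.Walk u v) (hp : p.IsPath) : m ∈ p.support := by
  obtain ⟨p1, hp1, hl1⟩ := hT.isConnected.exists_path_of_dist u m
  obtain ⟨p2, hp2, hl2⟩ := hT.isConnected.exists_path_of_dist m v
  have hlen : (p1.append p2).length = G.dist u v := by
    rw [SimpleGraph.Walk.length_append, hl1, hl2, h]
  have hpath := (p1.append p2).isPath_of_length_eq_dist hlen
  have := hT.IsAcyclic.path_unique ⟨p, hp⟩ ⟨p1.append p2, hpath⟩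
  rw [show p = p1.append p2 from congrArg Subtype.val this]
  rw [SimpleGraph.Walk.mem_support_append_iff]
  exact Or.inl p1.end_mem_support

/-- Appending two paths that only meet in the junction vertex yields a path. -/
lemma append_isPath {a m b : V} (r : G.Walk a m) :
    r.IsPath → ∀ (s : G.Walk m b), s.IsPath →
    (∀ v ∈ r.support, v ∈ s.support → v = m) → (r.append s).IsPath := by
  induction r with
  | nil => intro _ s hs _; simpa using hs
  | @cons a1 c1 m1 hac r ih =>
    intro hr s hs hmeet
    rw [SimpleGraph.Walk.cons_append, SimpleGraph.Walk.cons_isPath_iff]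
    rw [SimpleGraph.Walk.cons_isPath_iff] at hr
    refine ⟨ih hr.1 s hs (fun v hv hvs => hmeet v (by simp [hv]) hvs), ?_⟩
    rw [SimpleGraph.Walk.mem_support_append_iff]
    rintro (h | h)
    · exact hr.2 h
    · have ham : a1 = m1 := hmeet a1 (by simp) h
      subst ham
      have h2 : (SimpleGraph.Walk.cons hac r).IsPath := by
        rw [SimpleGraph.Walk.cons_isPath_iff]; exact hr
      rw [SimpleGraph.Walk.isPath_iff_eq_nil] at h2
      simp at h2

/-- First meeting point of a walk with a list of vertices. -/
lemma exists_first_meet {a b : V} (q : G.Walk a b) (P : List V) :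
    b ∈ P → ∃ m, m ∈ P ∧ ∃ r : G.Walk a m, r.support ⊆ q.support ∧
      ∀ v ∈ r.support, v ∈ P → v = m := by
  induction q with
  | nil =>
    intro hb
    exact ⟨_, hb, SimpleGraph.Walk.nil, by simp, fun v hv _ => by simpa using hv⟩
  | @cons a c b hac q ih =>
    intro hb
    by_cases haP : a ∈ P
    · exact ⟨a, haP, SimpleGraph.Walk.nil, by simp, fun v hv _ => by simpa using hv⟩
    · obtain ⟨m, hmP, r, hsub, hmeet⟩ := ih hb
      refine ⟨m, hmP, SimpleGraph.Walk.cons hac r, ?_, ?_⟩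
      · intro v hv
        rw [SimpleGraph.Walk.support_cons, List.mem_cons] at hv ⊢
        rcases hv with h | h
        · exact Or.inl h
        · exact Or.inr (hsub h)
      · intro v hv hvP
        rw [SimpleGraph.Walk.support_cons, List.mem_cons] at hv
        rcases hv with h | h
        · exact absurd (h ▸ hvP) haP
        · exact hmeet v h hvP

/-- Median existence in a tree. -/
lemma tree_median (hT : G.IsTree) (a b c : V) :
    ∃ m, G.dist a m + G.dist m b = G.dist a b ∧
         G.dist a m + G.dist m c = G.dist a c ∧
         G.dist b m + G.dist m c = G.dist b c := by
  classical
  obtain ⟨p, hp, _⟩ := hT.isConnected.exists_path_of_dist b c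
  obtain ⟨q, _, _⟩ := hT.isConnected.exists_path_of_dist a b
  obtain ⟨m, hmP, r0, _, hmeet0⟩ := exists_first_meet q p.support p.start_mem_support
  set r := r0.bypass with hrdef
  have hrpath : r.IsPath := r0.bypass_isPath
  have hmeet : ∀ v ∈ r.support, v ∈ p.support → v = m :=
    fun v hv => hmeet0 v (r0.support_bypass_subset hv)
  have hW1 : (r.append (p.takeUntil m hmP).reverse).IsPath := by
    refine append_isPath _ hrpath _ (hp.takeUntil hmP).reverse ?_
    intro v hv hvs
    rw [SimpleGraph.Walk.support_reverse, List.mem_reverse] at hvs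
    exact hmeet v hv (p.support_takeUntil_subset hmP hvs)
  have hW2 : (r.append (p.dropUntil m hmP)).IsPath := by
    refine append_isPath _ hrpath _ (hp.dropUntil hmP) ?_
    intro v hv hvs
    exact hmeet v hv (p.support_dropUntil_subset hmP hvs)
  have e1 := tree_path_length hT _ hW1
  have e2 := tree_path_length hT _ hW2
  rw [SimpleGraph.Walk.length_append, SimpleGraph.Walk.length_reverse] at e1
  rw [SimpleGraph.Walk.length_append] at e2
  have er : r.length = G.dist a m := tree_path_length hT r hrpath
  have et : (p.takeUntil m hmP).length = G.dist b m := tree_path_length hT _ (hp.takeUntil hmP)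
  have ed : (p.dropUntil m hmP).length = G.dist m c := tree_path_length hT _ (hp.dropUntil hmP)
  have e3 := tree_split hT p hp hmP
  have hcomm : G.dist m b = G.dist b m := SimpleGraph.dist_comm
  exact ⟨m, by omega, by omega, e3⟩

/-- Alignment: two points on a geodesic are comparable. -/
lemma tree_align (hT : G.IsTree) {u w n m : V}
    (hn : G.dist u n + G.dist n w = G.dist u w)
    (hm : G.dist u m + G.dist m w = G.dist u w)
    (hle : G.dist u n ≤ G.dist u m) :
    G.dist n m + G.dist m w = G.dist n w := by
  classical
  obtain ⟨p, hp, _⟩ := hT.isConnected.exists_path_of_dist u w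
  have hnp : n ∈ p.support := btw_mem_path hT hn p hp
  have hmp : m ∈ p.support := btw_mem_path hT hm p hp
  have hmem : m ∈ (p.takeUntil n hnp).support ∨ m ∈ (p.dropUntil n hnp).support := by
    rw [← SimpleGraph.Walk.mem_support_append_iff, SimpleGraph.Walk.take_spec]
    exact hmp
  rcases hmem with h | h
  · have h1 := tree_split hT _ (hp.takeUntil hnp) h
    have h3 : G.dist m n = 0 := by omega
    have hmn : m = n := (hT.isConnected m n).dist_eq_zero_iff.mp h3
    subst hmn
    simp [SimpleGraph.dist_self]
  · exact tree_split hT _ (hp.dropUntil hnp) h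

lemma tree_chain {p q r s : V} (hT : G.IsTree)
    (h1 : G.dist p q + G.dist q r = G.dist p r)
    (h2 : G.dist q s + G.dist s r = G.dist q r) :
    G.dist p s + G.dist s r = G.dist p r := by
  have t1 := hT.isConnected.dist_triangle (u := p) (v := q) (w := s)
  have t2 := hT.isConnected.dist_triangle (u := p) (v := s) (w := r)
  omega

lemma tree_chain2 {p q r s : V} (hT : G.IsTree)
    (h1 : G.dist p q + G.dist q r = G.dist p r)
    (h2 : G.dist p s + G.dist s q = G.dist p q) :
    G.dist p s + G.dist s r = G.dist p r := by
  have t1 := hT.isConnected.dist_triangle (u := s) (v := q) (w := r)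
  have t2 := hT.isConnected.dist_triangle (u := p) (v := s) (w := r)
  omega

/-- If `y` lies between `c` and `e`, then for any `a`, `y` lies between `a` and `c`
or between `a` and `e`. -/
lemma tree_push (hT : G.IsTree) {c e y : V} (hy : G.dist c y + G.dist y e = G.dist c e)
    (a : V) :
    G.dist a y + G.dist y c = G.dist a c ∨ G.dist a y + G.dist y e = G.dist a e := by
  obtain ⟨m, hmc, hme, hce⟩ := tree_median hT a c e
  rcases le_total (G.dist c m) (G.dist c y) with hcase | hcase
  · have hbm : G.dist c m + G.dist m e = G.dist c e := by
      have : G.dist m c = G.dist c m := SimpleGraph.dist_comm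
      omega
    have halign := tree_align hT hbm hy hcase
    exact Or.inr (tree_chain hT hme halign)
  · have hbm : G.dist e m + G.dist m c = G.dist e c := by
      have h1 : G.dist m c = G.dist c m := SimpleGraph.dist_comm
      have h2 : G.dist e m = G.dist m e := SimpleGraph.dist_comm
      have h3 : G.dist e c = G.dist c e := SimpleGraph.dist_comm
      omega
    have hy' : G.dist e y + G.dist y c = G.dist e c := by
      have h1 : G.dist e y = G.dist y e := SimpleGraph.dist_comm
      have h2 : G.dist y c = G.dist c y := SimpleGraph.dist_comm
      have h3 : G.dist e c = G.dist c e := SimpleGraph.dist_comm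
      omega
    have hle : G.dist e m ≤ G.dist e y := by
      have h1 : G.dist m c = G.dist c m := SimpleGraph.dist_comm
      have h2 : G.dist e m = G.dist m e := SimpleGraph.dist_comm
      have h3 : G.dist e y = G.dist y e := SimpleGraph.dist_comm
      omega
    have halign2 := tree_align hT hbm hy' hle
    exact Or.inl (tree_chain hT hmc halign2)

/-- In a tree with a diametral-type pair `u w`, every distance from `z` is bounded by
the larger of the distances to `u` and `w`. -/
lemma tree_dist_le_max (hT : G.IsTree) {u w : V}
    (h_u : ∀ y, G.dist u y ≤ G.dist u w) (h_w : ∀ y, G.dist w y ≤ G.dist u w)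
    (z y : V) : G.dist z y ≤ max (G.dist z u) (G.dist z w) := by
  obtain ⟨m, hmu, hmw, huwm⟩ := tree_median hT y u w
  have cmu : G.dist m u = G.dist u m := SimpleGraph.dist_comm
  have cyu : G.dist y u = G.dist u y := SimpleGraph.dist_comm
  have cyw : G.dist y w = G.dist w y := SimpleGraph.dist_comm
  have h1 : G.dist y m ≤ G.dist m w := by have := h_u y; omega
  have h2 : G.dist y m ≤ G.dist m u := by have := h_w y; omega
  obtain ⟨n, hnu, hnw, huwn⟩ := tree_median hT z u w
  have cnu : G.dist n u = G.dist u n := SimpleGraph.dist_comm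
  rcases le_total (G.dist u n) (G.dist u m) with hcase | hcase
  · have hn' : G.dist u n + G.dist n w = G.dist u w := by omega
    have hm' : G.dist u m + G.dist m w = G.dist u w := by omega
    have halign := tree_align hT hn' hm' hcase
    have t1 := hT.isConnected.dist_triangle (u := z) (v := m) (w := y)
    have t2 := hT.isConnected.dist_triangle (u := z) (v := n) (w := m)
    have cmy : G.dist m y = G.dist y m := SimpleGraph.dist_comm
    have : G.dist z y ≤ G.dist z w := by omega
    exact le_max_of_le_right this
  · have cwn : G.dist w n = G.dist n w := SimpleGraph.dist_comm
    have cwm : G.dist w m = G.dist m w := SimpleGraph.dist_comm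
    have cwu : G.dist w u = G.dist u w := SimpleGraph.dist_comm
    have hn'' : G.dist w n + G.dist n u = G.dist w u := by omega
    have hm'' : G.dist w m + G.dist m u = G.dist w u := by omega
    have hle2 : G.dist w n ≤ G.dist w m := by omega
    have halign := tree_align hT hn'' hm'' hle2
    have t1 := hT.isConnected.dist_triangle (u := z) (v := m) (w := y)
    have t2 := hT.isConnected.dist_triangle (u := z) (v := n) (w := m)
    have cmy : G.dist m y = G.dist y m := SimpleGraph.dist_comm
    have : G.dist z y ≤ G.dist z u := by omega
    exact le_max_of_le_left this

/-- Lifting a walk with support in `S` to the induced subgraph. -/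
lemma walk_lift {S : Set V} {a b : V} (p : G.Walk a b) :
    ∀ (ha : a ∈ S) (hb : b ∈ S), (∀ v ∈ p.support, v ∈ S) →
    ∃ q : (G.induce S).Walk ⟨a, ha⟩ ⟨b, hb⟩, q.length = p.length := by
  induction p with
  | nil => intro ha hb _; exact ⟨SimpleGraph.Walk.nil, rfl⟩
  | @cons a c b hadj p ih =>
    intro ha hb h
    have hc : c ∈ S := h c (by simp)
    obtain ⟨q, hq⟩ := ih hc hb (fun v hv => h v (by
      rw [SimpleGraph.Walk.support_cons]; exact List.mem_cons_of_mem _ hv))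
    have hac : (G.induce S).Adj ⟨a, ha⟩ ⟨c, hc⟩ := hadj
    exact ⟨SimpleGraph.Walk.cons hac q, by simp [hq]⟩

/-- Projecting a walk of the induced subgraph down to `G`. -/
lemma walk_down {S : Set V} {a b : ↥S} (q : (G.induce S).Walk a b) :
    ∃ p : G.Walk ↑a ↑b, p.length = q.length := by
  induction q with
  | nil => exact ⟨SimpleGraph.Walk.nil, rfl⟩
  | @cons a c b hadj q ih =>
    obtain ⟨p, hp⟩ := ih
    exact ⟨SimpleGraph.Walk.cons hadj p, by show p.length + 1 = q.length + 1; rw [hp]⟩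

end TreeLemmas

theorem steiner_tree_eccentricity
    {V : Type*} [Fintype V] (G : SimpleGraph V) (hT : G.IsTree) :
    ∀ x : {v : V | ∃ u w : V, ecc G u = sSup (Set.range (ecc G)) ∧
        ecc G w = sSup (Set.range (ecc G)) ∧
        G.dist u v + G.dist v w = G.dist u w},
      sSup (Set.range ((G.induce {v : V | ∃ u w : V,
          ecc G u = sSup (Set.range (ecc G)) ∧
          ecc G w = sSup (Set.range (ecc G)) ∧
          G.dist u v + G.dist v w = G.dist u w}).dist x)) = ecc G ↑x := by
  classical
  set S := {v : V | ∃ u w : V, ecc G u = sSup (Set.range (ecc G)) ∧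
      ecc G w = sSup (Set.range (ecc G)) ∧
      G.dist u v + G.dist v w = G.dist u w} with hSdef
  intro x
  haveI : Nonempty V := ⟨↑x⟩
  haveI : Nonempty ↥S := ⟨x⟩
  have hconn := hT.isConnected
  have hbdd : ∀ v : V, BddAbove (Set.range (G.dist v)) :=
    fun v => (Set.finite_range _).bddAbove
  have hdist_le_ecc : ∀ v y : V, G.dist v y ≤ ecc G v :=
    fun v y => le_csSup (hbdd v) ⟨y, rfl⟩
  have hbddE : BddAbove (Set.range (ecc G)) := (Set.finite_range _).bddAbove
  have hecc_le_d : ∀ v, ecc G v ≤ sSup (Set.range (ecc G)) :=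
    fun v => le_csSup hbddE ⟨v, rfl⟩
  -- a diametral pair (u, w)
  obtain ⟨u, hu⟩ : ∃ u, ecc G u = sSup (Set.range (ecc G)) :=
    Nat.sSup_mem (Set.range_nonempty _) hbddE
  obtain ⟨w, hw⟩ : ∃ w, G.dist u w = ecc G u :=
    Nat.sSup_mem (Set.range_nonempty _) (hbdd u)
  have huw_d : G.dist u w = sSup (Set.range (ecc G)) := hw.trans hu
  have hwecc : ecc G w = sSup (Set.range (ecc G)) := by
    refine le_antisymm (hecc_le_d w) ?_
    calc sSup (Set.range (ecc G)) = G.dist u w := huw_d.symm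
      _ = G.dist w u := SimpleGraph.dist_comm
      _ ≤ ecc G w := hdist_le_ecc w u
  have h_u : ∀ y, G.dist u y ≤ G.dist u w := fun y => hw ▸ hdist_le_ecc u y
  have h_w : ∀ y, G.dist w y ≤ G.dist u w := fun y => by
    have h1 := hdist_le_ecc w y
    rw [hwecc] at h1
    rw [huw_d]
    exact h1
  have huS : u ∈ S := ⟨u, u, hu, hu, by simp [SimpleGraph.dist_self]⟩
  have hwS : w ∈ S := ⟨w, w, hwecc, hwecc, by simp [SimpleGraph.dist_self]⟩
  -- convexity of S
  have hconv : ∀ (a b : ↥S) (v : V),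
      G.dist ↑a v + G.dist v ↑b = G.dist ↑a ↑b → v ∈ S := by
    rintro ⟨a, pa, qa, hpa, hqa, hba⟩ ⟨b, pb, qb, hpb, hqb, hbb⟩ v hv
    -- step 1 : v between one of {pa, qa} and b
    have step1 : ∃ p, ecc G p = sSup (Set.range (ecc G)) ∧
        G.dist p v + G.dist v b = G.dist p b := by
      rcases tree_push hT hba b with h | h
      · refine ⟨pa, hpa, ?_⟩
        have h1 : G.dist pa a + G.dist a b = G.dist pa b := by
          have c1 : G.dist b a = G.dist a b := SimpleGraph.dist_comm
          have c2 : G.dist a pa = G.dist pa a := SimpleGraph.dist_comm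
          have c3 : G.dist b pa = G.dist pa b := SimpleGraph.dist_comm
          omega
        exact tree_chain hT h1 hv
      · refine ⟨qa, hqa, ?_⟩
        have h1 : G.dist qa a + G.dist a b = G.dist qa b := by
          have c1 : G.dist b a = G.dist a b := SimpleGraph.dist_comm
          have c2 : G.dist a qa = G.dist qa a := SimpleGraph.dist_comm
          have c3 : G.dist b qa = G.dist qa b := SimpleGraph.dist_comm
          omega
        exact tree_chain hT h1 hv
    obtain ⟨p, hpecc, hpv⟩ := step1
    -- step 2 : v between p and one of {pb, qb}
    rcases tree_push hT hbb p with h | h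
    · refine ⟨p, pb, hpecc, hpb, ?_⟩
      have h1 : G.dist p b + G.dist b pb = G.dist p pb := by
        have c1 : G.dist b p = G.dist p b := SimpleGraph.dist_comm
        have c2 : G.dist b pb = G.dist pb b := SimpleGraph.dist_comm
        have c3 : G.dist p pb = G.dist pb p := SimpleGraph.dist_comm.symm ▸ rfl
        have c4 : G.dist pb p = G.dist p pb := SimpleGraph.dist_comm
        omega
      exact tree_chain2 hT h1 hpv
    · refine ⟨p, qb, hpecc, hqb, ?_⟩
      have h1 : G.dist p b + G.dist b qb = G.dist p qb := by
        have c1 : G.dist b p = G.dist p b := SimpleGraph.dist_comm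
        have c4 : G.dist qb p = G.dist p qb := SimpleGraph.dist_comm
        omega
      exact tree_chain2 hT h1 hpv
  -- distances in the induced subgraph agree with distances in G
  have distEq : ∀ a b : ↥S, (G.induce S).dist a b = G.dist ↑a ↑b := by
    intro a b
    obtain ⟨p, hp, hpl⟩ := hconn.exists_path_of_dist ↑a ↑b
    have hsupp : ∀ v ∈ p.support, v ∈ S :=
      fun v hv => hconv a b v (tree_split hT p hp hv)
    obtain ⟨q, hq⟩ := walk_lift p a.2 b.2 hsupp
    refine le_antisymm ?_ ?_
    · calc (G.induce S).dist a b ≤ q.length := SimpleGraph.dist_le q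
        _ = G.dist ↑a ↑b := by rw [hq, hpl]
    · obtain ⟨q', hq'⟩ := (SimpleGraph.Reachable.exists_walk_length_eq_dist ⟨q⟩)
      obtain ⟨p', hp'⟩ := walk_down q'
      calc G.dist ↑a ↑b ≤ p'.length := SimpleGraph.dist_le p'
        _ = (G.induce S).dist a b := by rw [hp', hq']
  -- final computation
  refine le_antisymm ?_ ?_
  · refine csSup_le (Set.range_nonempty _) ?_
    rintro _ ⟨y, rfl⟩
    rw [distEq x y]
    exact hdist_le_ecc _ _
  · have hF1 : ecc G ↑x ≤ max (G.dist ↑x u) (G.dist ↑x w) := by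
      refine csSup_le (Set.range_nonempty _) ?_
      rintro _ ⟨y, rfl⟩
      exact tree_dist_le_max hT h_u h_w ↑x y
    have hb' : BddAbove (Set.range ((G.induce S).dist x)) := (Set.finite_range _).bddAbove
    have hxu : G.dist ↑x u ≤ sSup (Set.range ((G.induce S).dist x)) := by
      have := distEq x ⟨u, huS⟩
      calc G.dist ↑x u = (G.induce S).dist x ⟨u, huS⟩ := this.symm
        _ ≤ _ := le_csSup hb' ⟨⟨u, huS⟩, rfl⟩
    have hxw : G.dist ↑x w ≤ sSup (Set.range ((G.induce S).dist x)) := by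
      have := distEq x ⟨w, hwS⟩
      calc G.dist ↑x w = (G.induce S).dist x ⟨w, hwS⟩ := this.symm
        _ ≤ _ := le_csSup hb' ⟨⟨w, hwS⟩, rfl⟩
    exact hF1.trans (max_le hxu hxw)
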